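/- Let m, q, p be positive real numbers with m < q, let f : ℝ → ℝ be differentiable, and suppose there is a constant K > 0 with |f(t)| + |f′(t)| ≤ K for all t ∈ ℝ. Then | Σ_{ℓ ∈ ℤ, m < ℓ < q, ℓ even} f(ℓ/p) − (p/2) ∫_{m/p}^{q/p} f(t) dt | ≤ K(q−m)/p + 2K, and likewise | Σ_{ℓ ∈ ℤ, m < ℓ < q, ℓ odd} f(ℓ/p) − (p/2) ∫_{m/p}^{q/p} f(t) dt | ≤ K(q−m)/p + 2K. -/

import Mathlib

open intervalIntegral MeasureTheory

/-- Core estimate: a midpoint-style Riemann sum error bound. -/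
private lemma approx_core (f : ℝ → ℝ) (hcont : Continuous f) (K : ℝ) (hK : 0 < K)
    (hfle : ∀ t, |f t| ≤ K) (hlip : ∀ s t : ℝ, |f s - f t| ≤ K * |s - t|)
    (p : ℝ) (hp : 0 < p) (n : ℕ) (x u v : ℝ)
    (hu : |x * p - u| ≤ 1) (hv : |(x + 2 * n / p) * p - v| ≤ 1) :
    |(∑ k ∈ Finset.range n, f (x + (2 * k + 1) / p)) - (p / 2) * ∫ t in (u / p)..(v / p), f t|
      ≤ n * K / p + K := by
  have hp1 : (0:ℝ) < 1 / p := by positivity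
  have hint : ∀ a b : ℝ, IntervalIntegrable f volume a b :=
    fun a b => hcont.intervalIntegrable a b
  set a : ℕ → ℝ := fun k => x + 2 * k / p with ha
  clear_value a
  have tele : ∑ k ∈ Finset.range n, (∫ t in a k..a (k + 1), f t)
      = ∫ t in (a 0)..(a n), f t :=
    intervalIntegral.sum_integral_adjacent_intervals (fun k _ => hint _ _)
  have hR : ∀ k : ℕ, a (k + 1) = a k + (1 / p + 1 / p) := by
    intro k; simp only [ha]; push_cast; field_simp; ring
  -- per term bound
  have key : ∀ k : ℕ, |f (x + (2 * k + 1) / p) - (p / 2) * ∫ t in a k..a (k + 1), f t|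
      ≤ K / p := by
    intro k
    set c := x + (2 * (k : ℝ) + 1) / p with hc
    clear_value c
    have hca : c = a k + 1 / p := by simp only [hc, ha]; field_simp; ring
    have hlt : a k ≤ a (k + 1) := by rw [hR k]; linarith
    have hIc : (∫ t in a k..a (k + 1), f t)
        = (∫ t in a k..a (k + 1), (f t - f c)) + (2 / p) * f c := by
      rw [intervalIntegral.integral_sub (hint _ _) intervalIntegrable_const,
        intervalIntegral.integral_const, smul_eq_mul, hR k]
      ring
    have hbd : |∫ t in a k..a (k + 1), (f t - f c)| ≤ (K / p) * |a (k + 1) - a k| := by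
      have h := intervalIntegral.norm_integral_le_of_norm_le_const
          (a := a k) (b := a (k + 1)) (C := K / p) (f := fun t => f t - f c) ?_
      · simpa using h
      · intro t ht
        rw [Set.uIoc_of_le hlt] at ht
        have h1 : a k < t := ht.1
        have h2 : t ≤ a k + (1 / p + 1 / p) := by rw [← hR k]; exact ht.2
        have htc : |t - c| ≤ 1 / p := by
          rw [abs_le, hca]
          constructor <;> linarith
        calc ‖f t - f c‖ = |f t - f c| := rfl
          _ ≤ K * |t - c| := hlip t c
          _ ≤ K * (1 / p) := mul_le_mul_of_nonneg_left htc hK.le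
          _ = K / p := by ring
    have heq : f c - (p / 2) * ∫ t in a k..a (k + 1), f t
        = -((p / 2) * ∫ t in a k..a (k + 1), (f t - f c)) := by
      rw [hIc]; field_simp; ring
    rw [heq, abs_neg, abs_mul, abs_of_nonneg (by positivity : (0:ℝ) ≤ p / 2)]
    have hlen : |a (k + 1) - a k| = 1 / p + 1 / p := by
      rw [hR k]; simp only [add_sub_cancel_left]
      rw [abs_of_nonneg (by positivity)]
    calc p / 2 * |∫ t in a k..a (k + 1), (f t - f c)|
        ≤ p / 2 * ((K / p) * |a (k + 1) - a k|) :=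
          mul_le_mul_of_nonneg_left hbd (by positivity)
      _ = p / 2 * ((K / p) * (1 / p + 1 / p)) := by rw [hlen]
      _ = K / p := by field_simp; ring
  -- boundary bounds
  have hb1 : |∫ t in (u / p)..(a 0), f t| ≤ K / p := by
    have h0 : |a 0 - u / p| ≤ 1 / p := by
      have e : a 0 - u / p = (x * p - u) / p := by simp only [ha]; push_cast; field_simp; ring
      rw [e, abs_div, abs_of_pos hp]
      gcongr
    have h := intervalIntegral.norm_integral_le_of_norm_le_const
        (a := u / p) (b := a 0) (C := K) (f := f) (fun t _ => hfle t)
    rw [Real.norm_eq_abs] at h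
    calc |∫ t in (u / p)..(a 0), f t| ≤ K * |a 0 - u / p| := h
      _ ≤ K * (1 / p) := mul_le_mul_of_nonneg_left h0 hK.le
      _ = K / p := by ring
  have hb2 : |∫ t in (a n)..(v / p), f t| ≤ K / p := by
    have h0 : |v / p - a n| ≤ 1 / p := by
      have e : v / p - a n = -(((x + 2 * n / p) * p - v) / p) := by
        simp only [ha]; field_simp; ring
      rw [e, abs_neg, abs_div, abs_of_pos hp]
      gcongr
    have h := intervalIntegral.norm_integral_le_of_norm_le_const
        (a := a n) (b := v / p) (C := K) (f := f) (fun t _ => hfle t)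
    rw [Real.norm_eq_abs] at h
    calc |∫ t in (a n)..(v / p), f t| ≤ K * |v / p - a n| := h
      _ ≤ K * (1 / p) := mul_le_mul_of_nonneg_left h0 hK.le
      _ = K / p := by ring
  have e1 : (∫ t in (u / p)..(a 0), f t) + (∫ t in (a 0)..(a n), f t)
      = ∫ t in (u / p)..(a n), f t :=
    intervalIntegral.integral_add_adjacent_intervals (hint _ _) (hint _ _)
  have e2 : (∫ t in (u / p)..(a n), f t) + (∫ t in (a n)..(v / p), f t)
      = ∫ t in (u / p)..(v / p), f t :=
    intervalIntegral.integral_add_adjacent_intervals (hint _ _) (hint _ _)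
  have main_eq : (∑ k ∈ Finset.range n, f (x + (2 * k + 1) / p))
      - (p / 2) * ∫ t in (u / p)..(v / p), f t
      = (∑ k ∈ Finset.range n,
          (f (x + (2 * k + 1) / p) - (p / 2) * ∫ t in a k..a (k + 1), f t))
        - (p / 2) * ((∫ t in (u / p)..(a 0), f t) + (∫ t in (a n)..(v / p), f t)) := by
    rw [Finset.sum_sub_distrib, ← Finset.mul_sum, tele, ← e2, ← e1]; ring
  rw [main_eq]
  have habs : ∀ X Y : ℝ, |X - Y| ≤ |X| + |Y| := by
    intro X Y
    calc |X - Y| ≤ |X| + |-Y| := by rw [sub_eq_add_neg]; exact abs_add_le _ _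
      _ = |X| + |Y| := by rw [abs_neg]
  calc |(∑ k ∈ Finset.range n,
          (f (x + (2 * k + 1) / p) - (p / 2) * ∫ t in a k..a (k + 1), f t))
        - (p / 2) * ((∫ t in (u / p)..(a 0), f t) + (∫ t in (a n)..(v / p), f t))|
      ≤ |∑ k ∈ Finset.range n,
          (f (x + (2 * k + 1) / p) - (p / 2) * ∫ t in a k..a (k + 1), f t)|
        + |(p / 2) * ((∫ t in (u / p)..(a 0), f t) + (∫ t in (a n)..(v / p), f t))| :=
        habs _ _
    _ ≤ n * (K / p) + (p / 2) * (K / p + K / p) := by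
        gcongr ?_ + ?_
        · calc |∑ k ∈ Finset.range n,
              (f (x + (2 * k + 1) / p) - (p / 2) * ∫ t in a k..a (k + 1), f t)|
              ≤ ∑ k ∈ Finset.range n,
                |f (x + (2 * k + 1) / p) - (p / 2) * ∫ t in a k..a (k + 1), f t| :=
                Finset.abs_sum_le_sum_abs _ _
            _ ≤ ∑ _k ∈ Finset.range n, (K / p) := Finset.sum_le_sum (fun k _ => key k)
            _ = n * (K / p) := by rw [Finset.sum_const, Finset.card_range, nsmul_eq_mul]
        · rw [abs_mul, abs_of_nonneg (by positivity : (0:ℝ) ≤ p / 2)]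
          gcongr
          exact (abs_add_le _ _).trans (by gcongr)
    _ = n * K / p + K := by field_simp; ring

private lemma parity_bound (m q p : ℝ) (hp : 0 < p) (hmq : m < q)
    (f : ℝ → ℝ) (hcont : Continuous f) (K : ℝ) (hK : 0 < K)
    (hfle : ∀ t, |f t| ≤ K) (hlip : ∀ s t : ℝ, |f s - f t| ≤ K * |s - t|)
    (r : ℤ) (hr : 0 ≤ r ∧ r < 2) (S : Finset ℤ)
    (hS : ∀ ℓ : ℤ, ℓ ∈ S ↔ ((m < (ℓ:ℝ) ∧ (ℓ:ℝ) < q) ∧ ℓ % 2 = r)) :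
    |(∑ ℓ ∈ S, f ((ℓ:ℝ) / p)) - (p / 2) * ∫ t in (m / p)..(q / p), f t|
      ≤ K * (q - m) / p + 2 * K := by
  set A : ℤ := ⌊(m - r) / 2⌋ with hA
  set B : ℤ := ⌈(q - r) / 2⌉ with hB
  have hA1 : (A : ℝ) ≤ (m - r) / 2 := Int.floor_le _
  have hA2 : (m - r) / 2 - 1 < A := Int.sub_one_lt_floor _
  have hB1 : (q - r) / 2 ≤ (B : ℝ) := Int.le_ceil _
  have hB2 : (B : ℝ) < (q - r) / 2 + 1 := Int.ceil_lt_add_one _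
  have hAB : A < B := by
    have : (A : ℝ) < B := by linarith
    exact_mod_cast this
  set n : ℕ := (B - A - 1).toNat with hn
  have hncast : (n : ℤ) = B - A - 1 := Int.toNat_of_nonneg (by omega)
  have hncastR : (n : ℝ) = (B : ℝ) - A - 1 := by
    have := congrArg (fun z : ℤ => (z : ℝ)) hncast
    push_cast at this
    linarith [this]
  -- identify the finset
  have himg : S = (Finset.range n).image (fun k : ℕ => 2 * (A + 1 + (k : ℤ)) + r) := by
    ext ℓ
    rw [hS ℓ, Finset.mem_image]
    constructor
    · rintro ⟨⟨h1, h2⟩, h3⟩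
      set j : ℤ := (ℓ - r) / 2 with hj
      have hjl : ℓ = 2 * j + r := by omega
      have hAj : A < j := by
        apply Int.floor_lt.2
        have : (ℓ : ℝ) = 2 * j + r := by exact_mod_cast congrArg (fun z : ℤ => (z : ℝ)) hjl
        push_cast
        linarith
      have hjB : j < B := by
        apply Int.lt_ceil.2
        have : (ℓ : ℝ) = 2 * j + r := by exact_mod_cast congrArg (fun z : ℤ => (z : ℝ)) hjl
        push_cast
        linarith
      refine ⟨(j - A - 1).toNat, Finset.mem_range.2 (by omega), ?_⟩
      have : ((j - A - 1).toNat : ℤ) = j - A - 1 := Int.toNat_of_nonneg (by omega)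
      rw [this]
      omega
    · rintro ⟨k, hk, rfl⟩
      rw [Finset.mem_range] at hk
      have hk' : (k : ℤ) ≤ B - A - 2 := by omega
      have hkR : (k : ℝ) ≤ (B : ℝ) - A - 2 := by exact_mod_cast hk'
      refine ⟨⟨?_, ?_⟩, by omega⟩
      · push_cast
        have : (0:ℝ) ≤ (k : ℝ) := Nat.cast_nonneg k
        linarith
      · push_cast
        linarith
  -- rewrite the sum
  have hinj : Set.InjOn (fun k : ℕ => 2 * (A + 1 + (k : ℤ)) + r) (Finset.range n) := by
    intro s _ t _ h
    simp only at h
    omega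
  have hsum : (∑ ℓ ∈ S, f ((ℓ:ℝ) / p))
      = ∑ k ∈ Finset.range n, f (((2 * (A + 1 + (k : ℤ)) + r : ℤ) : ℝ) / p) := by
    rw [himg, Finset.sum_image (fun s hs t ht h => hinj hs ht h)]
  set x : ℝ := (2 * A + r + 1) / p with hx
  have hxarg : ∀ k : ℕ, ((2 * (A + 1 + (k : ℤ)) + r : ℤ) : ℝ) / p = x + (2 * k + 1) / p := by
    intro k
    rw [hx]
    push_cast
    field_simp
    ring
  have hsum2 : (∑ ℓ ∈ S, f ((ℓ:ℝ) / p))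
      = ∑ k ∈ Finset.range n, f (x + (2 * k + 1) / p) := by
    rw [hsum]
    exact Finset.sum_congr rfl (fun k _ => by rw [hxarg k])
  -- boundary data
  have hxp : x * p = 2 * A + r + 1 := by rw [hx]; field_simp
  have hu : |x * p - m| ≤ 1 := by
    rw [hxp, abs_le]
    constructor <;> linarith
  have hv : |(x + 2 * n / p) * p - q| ≤ 1 := by
    have : (x + 2 * n / p) * p = 2 * B + r - 1 := by
      rw [hx]; field_simp; rw [hncastR]; ring
    rw [this, abs_le]
    constructor <;> linarith
  -- fine bound
  have fine : |(∑ ℓ ∈ S, f ((ℓ:ℝ) / p)) - (p / 2) * ∫ t in (m / p)..(q / p), f t|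
      ≤ n * K / p + K := by
    rw [hsum2]
    exact approx_core f hcont K hK hfle hlip p hp n x m q hu hv
  -- crude bound
  have crude : |(∑ ℓ ∈ S, f ((ℓ:ℝ) / p)) - (p / 2) * ∫ t in (m / p)..(q / p), f t|
      ≤ n * K + K * (q - m) / 2 := by
    have hs : |∑ ℓ ∈ S, f ((ℓ:ℝ) / p)| ≤ n * K := by
      rw [hsum2]
      calc |∑ k ∈ Finset.range n, f (x + (2 * k + 1) / p)|
          ≤ ∑ k ∈ Finset.range n, |f (x + (2 * k + 1) / p)| := Finset.abs_sum_le_sum_abs _ _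
        _ ≤ ∑ _k ∈ Finset.range n, K := Finset.sum_le_sum (fun k _ => hfle _)
        _ = n * K := by rw [Finset.sum_const, Finset.card_range, nsmul_eq_mul]
    have hi : |(p / 2) * ∫ t in (m / p)..(q / p), f t| ≤ K * (q - m) / 2 := by
      have h := intervalIntegral.norm_integral_le_of_norm_le_const
          (a := m / p) (b := q / p) (C := K) (f := f) (fun t _ => hfle t)
      rw [Real.norm_eq_abs] at h
      have habs : |q / p - m / p| = (q - m) / p := by
        rw [show q / p - m / p = (q - m) / p by ring,
          abs_of_nonneg (div_nonneg (by linarith) hp.le)]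
      rw [habs] at h
      rw [abs_mul, abs_of_nonneg (by positivity : (0:ℝ) ≤ p / 2)]
      calc p / 2 * |∫ t in (m / p)..(q / p), f t| ≤ p / 2 * (K * ((q - m) / p)) := by
            apply mul_le_mul_of_nonneg_left h (by positivity)
        _ = K * (q - m) / 2 := by field_simp
    calc |(∑ ℓ ∈ S, f ((ℓ:ℝ) / p)) - (p / 2) * ∫ t in (m / p)..(q / p), f t|
        ≤ |∑ ℓ ∈ S, f ((ℓ:ℝ) / p)| + |(p / 2) * ∫ t in (m / p)..(q / p), f t| := by
          rw [sub_eq_add_neg]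
          exact (abs_add_le _ _).trans (by rw [abs_neg])
      _ ≤ n * K + K * (q - m) / 2 := add_le_add hs hi
  -- counting
  have hcount : (n : ℝ) ≤ (q - m) / 2 + 1 := by
    rw [hncastR]; linarith
  have hqm : (0:ℝ) < q - m := by linarith
  rcases le_or_gt p 1 with hple | hpgt
  · -- crude suffices
    refine crude.trans ?_
    have h1 : (q - m) ≤ (q - m) / p := by
      rw [le_div_iff₀ hp]
      nlinarith
    have h2 : (n:ℝ) * K ≤ ((q - m) / 2 + 1) * K :=
      mul_le_mul_of_nonneg_right hcount hK.le
    have h3 : K * (q - m) ≤ K * (q - m) / p := by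
      rw [div_eq_mul_inv, mul_assoc]
      have : (q - m) ≤ (q - m) * p⁻¹ := by
        rw [← div_eq_mul_inv]; exact h1
      exact mul_le_mul_of_nonneg_left this hK.le
    nlinarith
  · -- fine suffices
    refine fine.trans ?_
    have hn' : (n:ℝ) ≤ (q - m) + p := by linarith
    calc (n:ℝ) * K / p + K ≤ ((q - m) + p) * K / p + K := by gcongr
      _ = K * (q - m) / p + K * (p / p) + K := by ring
      _ = K * (q - m) / p + 2 * K := by rw [div_self (ne_of_gt hp)]; ring

theorem integral_approx_bounded_derivative (m q p : ℝ) (hm : 0 < m) (hq : 0 < q) (hp : 0 < p)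
    (hmq : m < q) (f : ℝ → ℝ) (hdiff : Differentiable ℝ f) (K : ℝ) (hK : 0 < K)
    (hbound : ∀ t : ℝ, |f t| + |deriv f t| ≤ K) :
    |(∑ ℓ ∈ (Finset.Ioo ⌊m⌋ ⌈q⌉).filter (fun ℓ => Even ℓ), f ((ℓ : ℝ) / p)) -
        (p / 2) * ∫ t in (m / p)..(q / p), f t| ≤ K * (q - m) / p + 2 * K ∧
    |(∑ ℓ ∈ (Finset.Ioo ⌊m⌋ ⌈q⌉).filter (fun ℓ => Odd ℓ), f ((ℓ : ℝ) / p)) -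
        (p / 2) * ∫ t in (m / p)..(q / p), f t| ≤ K * (q - m) / p + 2 * K := by
  have hcont : Continuous f := hdiff.continuous
  have hfle : ∀ t, |f t| ≤ K :=
    fun t => le_trans (le_add_of_nonneg_right (abs_nonneg _)) (hbound t)
  have hlipw : LipschitzWith ⟨K, hK.le⟩ f := by
    apply lipschitzWith_of_nnnorm_deriv_le hdiff
    intro t
    apply NNReal.coe_le_coe.1
    change ‖deriv f t‖ ≤ K
    rw [Real.norm_eq_abs]
    exact le_trans (le_add_of_nonneg_left (abs_nonneg _)) (hbound t)
  have hlip : ∀ s t : ℝ, |f s - f t| ≤ K * |s - t| := by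
    intro s t
    have h := hlipw.dist_le_mul s t
    rw [Real.dist_eq, Real.dist_eq] at h
    exact h
  constructor
  · apply parity_bound m q p hp hmq f hcont K hK hfle hlip 0 (by norm_num)
    intro ℓ
    simp only [Finset.mem_filter, Finset.mem_Ioo, Int.floor_lt, Int.lt_ceil, Int.even_iff]
  · apply parity_bound m q p hp hmq f hcont K hK hfle hlip 1 (by norm_num)
    intro ℓ
    simp only [Finset.mem_filter, Finset.mem_Ioo, Int.floor_lt, Int.lt_ceil, Int.odd_iff]
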